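/- arXiv:1608.08592 — 2 statements merged into one kernel-verified Lean document; each statement's English description precedes it below -/
import Mathlib

section
/- Let q ≥ 1 and let S be a finite set of words over the alphabet Σ = {x_1, …, x_q} such that S^† is co-finite. If the length of a shortest word in S is at least 3, then |S| ≥ 2q². -/
/-- `Shuffle u v w` means that the word `w` is an interleaving (shuffle) of the
words `u` and `v`. -/
inductive Shuffle {α : Type*} : List α → List α → List α → Prop
  | nil : Shuffle [] [] []
  | left {a : α} {u v w : List α} : Shuffle u v w → Shuffle (a :: u) v (a :: w)
  | right {a : α} {u v w : List α} : Shuffle u v w → Shuffle u (a :: v) (a :: w)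

/-- `IterShuffle S y` means `y` belongs to the iterated shuffle `S^†`, i.e. `y`
can be obtained by shuffling together finitely many (possibly zero) words of `S`. -/
inductive IterShuffle {α : Type*} (S : Set (List α)) : List α → Prop
  | nil : IterShuffle S []
  | step {u w y : List α} : u ∈ S → IterShuffle S w → Shuffle u w y → IterShuffle S y

section Aux

open List

variable {α : Type*}

lemma Shuffle.sub_left {u v w : List α} (h : Shuffle u v w) : u <+ w := by
  induction h with
  | nil => exact Sublist.refl _
  | left _ ih => exact ih.cons₂ _
  | right _ ih => exact ih.cons _

lemma Shuffle.sub_right {u v w : List α} (h : Shuffle u v w) : v <+ w := by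
  induction h with
  | nil => exact Sublist.refl _
  | left _ ih => exact ih.cons _
  | right _ ih => exact ih.cons₂ _

lemma Shuffle.len {u v w : List α} (h : Shuffle u v w) :
    w.length = u.length + v.length := by
  induction h with
  | nil => rfl
  | left _ ih => simp [ih]; omega
  | right _ ih => simp [ih]; omega

lemma Shuffle.mem_or {u v w : List α} (h : Shuffle u v w) :
    ∀ x ∈ w, x ∈ u ∨ x ∈ v := by
  induction h with
  | nil => intro x hx; simp at hx
  | @left a u v w _ ih =>
    intro x hx
    rcases mem_cons.1 hx with rfl | hx'
    · exact Or.inl mem_cons_self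
    · rcases ih x hx' with h' | h'
      · exact Or.inl (mem_cons_of_mem _ h')
      · exact Or.inr h'
  | @right a u v w _ ih =>
    intro x hx
    rcases mem_cons.1 hx with rfl | hx'
    · exact Or.inr mem_cons_self
    · rcases ih x hx' with h' | h'
      · exact Or.inl h'
      · exact Or.inr (mem_cons_of_mem _ h')

lemma IterShuffle.exists_mem {S : Set (List α)} {y : List α}
    (h : IterShuffle S y) :
    ∀ b ∈ y, ∃ u ∈ S, u <+ y ∧ b ∈ u := by
  induction h with
  | nil => intro b hb; simp at hb
  | @step u w y hu _ hsh ih =>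
    intro b hb
    rcases hsh.mem_or b hb with hbu | hbw
    · exact ⟨u, hu, hsh.sub_left, hbu⟩
    · obtain ⟨u', h1, h2, h3⟩ := ih b hbw
      exact ⟨u', h1, h2.trans hsh.sub_right, h3⟩

/-- If every word of `S` consisting only of letter `a` has length `p`,
then every word of `S^†` consisting only of `a`'s has length divisible by `p`. -/
lemma iter_pure_dvd {S : Set (List α)} {a : α} {p : ℕ}
    (hp : ∀ u ∈ S, (∀ x ∈ u, x = a) → u.length = p)
    {y : List α} (h : IterShuffle S y) :
    (∀ x ∈ y, x = a) → p ∣ y.length := by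
  induction h with
  | nil => intro _; simp
  | @step u w y hu _ hsh ih =>
    intro hy
    have hu' : ∀ x ∈ u, x = a := fun x hx => hy x (hsh.sub_left.subset hx)
    have hw' : ∀ x ∈ w, x = a := fun x hx => hy x (hsh.sub_right.subset hx)
    obtain ⟨k, hk⟩ := ih hw'
    exact ⟨1 + k, by rw [hsh.len, hp u hu hu', hk]; ring⟩

/-- If `S` contains no nonempty word consisting only of `a`'s, then no nonempty
word of `S^†` consists only of `a`'s. -/
lemma iter_pure_nil {S : Set (List α)} {a : α}
    (hno : ∀ u ∈ S, u ≠ [] → ¬(∀ x ∈ u, x = a))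
    {y : List α} (h : IterShuffle S y) :
    (∀ x ∈ y, x = a) → y = [] := by
  induction h with
  | nil => intro _; rfl
  | @step u w y hu hw hsh ih =>
    intro hy
    have hu' : ∀ x ∈ u, x = a := fun x hx => hy x (hsh.sub_left.subset hx)
    rcases eq_or_ne u [] with rfl | hne
    · have hw' : ∀ x ∈ w, x = a := fun x hx => hy x (hsh.sub_right.subset hx)
      have hwnil := ih hw'
      subst hwnil
      have hl := hsh.len
      simp at hl
      exact hl
    · exact absurd hu' (hno u hu hne)

/-- From cofiniteness, any injectively-indexed family of words meets `S^†`. -/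
lemma exists_iter {S : Set (List α)}
    (hcof : {w : List α | ¬ IterShuffle S w}.Finite)
    (f : ℕ → List α) (hf : Function.Injective f) : ∃ n, IterShuffle S (f n) := by
  by_contra h
  push_neg at h
  have hsub : Set.range f ⊆ {w : List α | ¬ IterShuffle S w} := by
    rintro y ⟨n, rfl⟩
    exact h n
  exact (Set.infinite_range_of_injective hf) (hcof.subset hsub)

end Aux

/-- If `q ≥ 1`, `S` is a finite set of words over a `q`-letter alphabet such that
`S^†` is co-finite, and the length of a shortest word of `S` is at least `3`,
then `|S| ≥ 2q²`. -/
theorem card_ge_of_min_three (q : ℕ) (hq : 1 ≤ q)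
    (S : Set (List (Fin q))) (hS : S.Finite)
    (hcof : {w : List (Fin q) | ¬ IterShuffle S w}.Finite)
    (hne : S.Nonempty) (hmin : ∀ w ∈ S, 3 ≤ w.length) :
    2 * q ^ 2 ≤ S.ncard := by
  classical
  -- Step 1: for each letter `a`, `S` contains two pure powers of `a` of distinct lengths.
  have h1 : ∀ a : Fin q, ∃ p₁ p₂ : ℕ, 3 ≤ p₁ ∧ 3 ≤ p₂ ∧ p₁ ≠ p₂ ∧
      List.replicate p₁ a ∈ S ∧ List.replicate p₂ a ∈ S := by
    intro a
    -- first, there is at least one pure power of `a` in `S`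
    have hpure : ∃ u ∈ S, ∀ x ∈ u, x = a := by
      by_contra hno
      push_neg at hno
      obtain ⟨n, hn⟩ := exists_iter hcof (fun n => List.replicate (n + 1) a)
        (fun m n h => by simpa using congrArg List.length h)
      have hnil := iter_pure_nil
        (fun u hu _ hall => by
          obtain ⟨x, hx, hxa⟩ := hno u hu
          exact hxa (hall x hx)) hn
        (fun x hx => List.eq_of_mem_replicate hx)
      simp at hnil
    obtain ⟨u0, hu0S, hu0p⟩ := hpure
    by_contra hcon
    push_neg at hcon
    -- then every pure power of `a` in `S` has the same length as `u0`
    have huniq : ∀ u ∈ S, (∀ x ∈ u, x = a) → u.length = u0.length := by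
      intro u huS hup
      by_contra hne'
      have e1 := List.eq_replicate_of_mem hu0p
      have e2 := List.eq_replicate_of_mem hup
      have hns := hcon u0.length u.length (hmin _ hu0S) (hmin _ huS)
        (fun h => hne' h.symm) (e1 ▸ hu0S)
      exact hns (e2 ▸ huS)
    have hp3 : 3 ≤ u0.length := hmin _ hu0S
    obtain ⟨n, hn⟩ := exists_iter hcof (fun n => List.replicate (n * u0.length + 1) a)
      (fun m n h => by
        have hl := congrArg List.length h
        simp only [List.length_replicate] at hl
        have hl' : m * u0.length = n * u0.length := Nat.add_right_cancel hl
        exact Nat.eq_of_mul_eq_mul_right (by omega) hl')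
    have hdvd := iter_pure_dvd huniq hn (fun x hx => List.eq_of_mem_replicate hx)
    simp only [List.length_replicate] at hdvd
    have hd1 : u0.length ∣ 1 := (Nat.dvd_add_right ⟨n, by ring⟩).mp hdvd
    have := Nat.le_of_dvd one_pos hd1
    omega
  -- Step 2: for distinct letters `a ≠ b`, `S` contains a word `a^i b` with `i ≥ 2`.
  have h2 : ∀ a b : Fin q, a ≠ b → ∃ i, 2 ≤ i ∧ List.replicate i a ++ [b] ∈ S := by
    intro a b hab
    obtain ⟨n, hn⟩ := exists_iter hcof (fun n => List.replicate n a ++ [b])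
      (fun m n h => by simpa using congrArg List.length h)
    obtain ⟨u, huS, hsub, hbu⟩ := hn.exists_mem b (by simp)
    rw [List.sublist_append_iff] at hsub
    obtain ⟨u1, u2, hu12, hs1, hs2⟩ := hsub
    have hu1 : ∀ x ∈ u1, x = a := fun x hx => List.eq_of_mem_replicate (hs1.subset hx)
    have hu2 : u2 = [b] := by
      rcases List.sublist_singleton.mp hs2 with rfl | rfl
      · rw [hu12] at hbu
        simp at hbu
        exact absurd (hu1 b hbu) (Ne.symm hab)
      · rfl
    subst hu2
    refine ⟨u1.length, ?_, ?_⟩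
    · have h3 := hmin _ huS
      rw [hu12] at h3
      simp at h3
      omega
    · have e : u1 = List.replicate u1.length a := List.eq_replicate_of_mem hu1
      rw [← e, ← hu12]
      exact huS
  -- Step 3: for distinct letters `a ≠ b`, `S` contains a word `b a^j` with `j ≥ 2`.
  have h3 : ∀ a b : Fin q, a ≠ b → ∃ j, 2 ≤ j ∧ (b :: List.replicate j a) ∈ S := by
    intro a b hab
    obtain ⟨n, hn⟩ := exists_iter hcof (fun n => b :: List.replicate n a)
      (fun m n h => by simpa using congrArg List.length h)
    obtain ⟨u, huS, hsub, hbu⟩ := hn.exists_mem b (by simp)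
    have hsub' : List.Sublist u ([b] ++ List.replicate n a) := hsub
    rw [List.sublist_append_iff] at hsub'
    obtain ⟨u1, u2, hu12, hs1, hs2⟩ := hsub'
    have hu2 : ∀ x ∈ u2, x = a := fun x hx => List.eq_of_mem_replicate (hs2.subset hx)
    have hu1 : u1 = [b] := by
      rcases List.sublist_singleton.mp hs1 with rfl | rfl
      · rw [hu12] at hbu
        simp at hbu
        exact absurd (hu2 b hbu) (Ne.symm hab)
      · rfl
    subst hu1
    refine ⟨u2.length, ?_, ?_⟩
    · have h4 := hmin _ huS
      rw [hu12] at h4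
      simp at h4
      omega
    · have e : u2 = List.replicate u2.length a := List.eq_replicate_of_mem hu2
      rw [← e, ← List.singleton_append, ← hu12]
      exact huS
  choose p₁ p₂ hp₁3 hp₂3 hpne hp₁S hp₂S using h1
  choose i hi2 hiS using h2
  choose j hj2 hjS using h3
  set m : Fin q × Fin q × Bool → List (Fin q) := fun x =>
    if h : x.1 = x.2.1 then
      (if x.2.2 then List.replicate (p₁ x.1) x.1 else List.replicate (p₂ x.1) x.1)
    else
      (if x.2.2 then List.replicate (i x.1 x.2.1 h) x.1 ++ [x.2.1]
       else x.2.1 :: List.replicate (j x.1 x.2.1 h) x.1) with hm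
  have hmem : ∀ x, m x ∈ S := by
    rintro ⟨a, b, t⟩
    simp only [hm]
    by_cases h : a = b
    · rw [dif_pos h]
      cases t
      · simpa using hp₂S a
      · simpa using hp₁S a
    · rw [dif_neg h]
      cases t
      · simpa using hjS a b h
      · simpa using hiS a b h
  have hinj : Function.Injective m := by
    rintro ⟨a, b, t⟩ ⟨a', b', t'⟩ h
    simp only [hm] at h
    by_cases h1 : a = b <;> by_cases h2 : a' = b'
    · -- both diagonal
      subst h1; subst h2
      rw [dif_pos rfl, dif_pos rfl] at h
      cases t <;> cases t' <;>
        simp only [Bool.false_eq_true, if_true, if_false, ite_true, ite_false] at h <;>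
        rw [List.replicate_inj] at h <;>
        [skip; skip; skip; skip] <;>
        obtain ⟨hlen, h'⟩ := h
      · rcases h' with h' | h'
        · exfalso; have := hp₂3 a; omega
        · subst h'; rfl
      · rcases h' with h' | h'
        · exfalso; have := hp₂3 a; omega
        · subst h'; exact absurd hlen.symm (hpne a)
      · rcases h' with h' | h'
        · exfalso; have := hp₁3 a; omega
        · subst h'; exact absurd hlen (hpne a)
      · rcases h' with h' | h'
        · exfalso; have := hp₁3 a; omega
        · subst h'; rfl
    · -- diagonal vs off-diagonal: impossible
      exfalso
      subst h1
      rw [dif_pos rfl, dif_neg h2] at h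
      cases t <;> cases t' <;>
        simp only [Bool.false_eq_true, if_true, if_false, ite_true, ite_false] at h
      · -- replicate (p₂ a) a = b' :: replicate (j a' b') a'
        have hb' : b' = a := List.eq_of_mem_replicate (by rw [h]; simp)
        have ha' : a' = a := List.eq_of_mem_replicate (b := a') (by
          rw [h]
          refine List.mem_cons_of_mem _ ?_
          exact List.mem_replicate.mpr ⟨by have := hj2 a' b' h2; omega, rfl⟩)
        exact h2 (ha'.trans hb'.symm)
      · have hb' : b' = a := List.eq_of_mem_replicate (by rw [h]; simp)
        have ha' : a' = a := List.eq_of_mem_replicate (b := a') (by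
          rw [h]
          exact List.mem_append_left _
            (List.mem_replicate.mpr ⟨by have := hi2 a' b' h2; omega, rfl⟩))
        exact h2 (ha'.trans hb'.symm)
      · have hb' : b' = a := List.eq_of_mem_replicate (by rw [h]; simp)
        have ha' : a' = a := List.eq_of_mem_replicate (b := a') (by
          rw [h]
          refine List.mem_cons_of_mem _ ?_
          exact List.mem_replicate.mpr ⟨by have := hj2 a' b' h2; omega, rfl⟩)
        exact h2 (ha'.trans hb'.symm)
      · have hb' : b' = a := List.eq_of_mem_replicate (by rw [h]; simp)
        have ha' : a' = a := List.eq_of_mem_replicate (b := a') (by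
          rw [h]
          exact List.mem_append_left _
            (List.mem_replicate.mpr ⟨by have := hi2 a' b' h2; omega, rfl⟩))
        exact h2 (ha'.trans hb'.symm)
    · -- off-diagonal vs diagonal: impossible
      exfalso
      subst h2
      rw [dif_neg h1, dif_pos rfl] at h
      replace h := h.symm
      cases t <;> cases t' <;>
        simp only [Bool.false_eq_true, if_true, if_false, ite_true, ite_false] at h
      · have hb : b = a' := List.eq_of_mem_replicate (by rw [h]; simp)
        have ha : a = a' := List.eq_of_mem_replicate (b := a) (by
          rw [h]
          refine List.mem_cons_of_mem _ ?_
          exact List.mem_replicate.mpr ⟨by have := hj2 a b h1; omega, rfl⟩)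
        exact h1 (ha.trans hb.symm)
      · have hb : b = a' := List.eq_of_mem_replicate (by rw [h]; simp)
        have ha : a = a' := List.eq_of_mem_replicate (b := a) (by
          rw [h]
          refine List.mem_cons_of_mem _ ?_
          exact List.mem_replicate.mpr ⟨by have := hj2 a b h1; omega, rfl⟩)
        exact h1 (ha.trans hb.symm)
      · have hb : b = a' := List.eq_of_mem_replicate (by rw [h]; simp)
        have ha : a = a' := List.eq_of_mem_replicate (b := a) (by
          rw [h]
          exact List.mem_append_left _
            (List.mem_replicate.mpr ⟨by have := hi2 a b h1; omega, rfl⟩))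
        exact h1 (ha.trans hb.symm)
      · have hb : b = a' := List.eq_of_mem_replicate (by rw [h]; simp)
        have ha : a = a' := List.eq_of_mem_replicate (b := a) (by
          rw [h]
          exact List.mem_append_left _
            (List.mem_replicate.mpr ⟨by have := hi2 a b h1; omega, rfl⟩))
        exact h1 (ha.trans hb.symm)
    · -- both off-diagonal
      rw [dif_neg h1, dif_neg h2] at h
      cases t <;> cases t' <;>
        simp only [Bool.false_eq_true, if_true, if_false, ite_true, ite_false] at h
      · -- b :: rep (j a b) a = b' :: rep (j a' b') a'
        simp only [List.cons.injEq] at h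
        obtain ⟨hbb, hrest⟩ := h
        have ha : a = a' := List.eq_of_mem_replicate (b := a) (by
          rw [← hrest]
          exact List.mem_replicate.mpr ⟨by have := hj2 a b h1; omega, rfl⟩)
        simp [ha, hbb]
      · -- b :: rep (j a b) a = rep (i a' b') a' ++ [b'] : contradiction
        exfalso
        obtain ⟨k, hk⟩ : ∃ k, i a' b' h2 = k + 1 + 1 :=
          ⟨i a' b' h2 - 2, by have := hi2 a' b' h2; omega⟩
        obtain ⟨l, hl⟩ : ∃ l, j a b h1 = l + 1 :=
          ⟨j a b h1 - 1, by have := hj2 a b h1; omega⟩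
        rw [hk, hl] at h
        simp only [List.replicate_succ, List.cons_append, List.cons.injEq] at h
        exact h1 (h.2.1.trans h.1.symm)
      · -- rep (i a b) a ++ [b] = b' :: rep (j a' b') a' : contradiction
        exfalso
        obtain ⟨k, hk⟩ : ∃ k, i a b h1 = k + 1 + 1 :=
          ⟨i a b h1 - 2, by have := hi2 a b h1; omega⟩
        obtain ⟨l, hl⟩ : ∃ l, j a' b' h2 = l + 1 :=
          ⟨j a' b' h2 - 1, by have := hj2 a' b' h2; omega⟩
        rw [hk, hl] at h
        simp only [List.replicate_succ, List.cons_append, List.cons.injEq] at h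
        exact h2 (h.2.1.symm.trans h.1)
      · -- rep (i a b) a ++ [b] = rep (i a' b') a' ++ [b']
        have hlen := congrArg List.length h
        simp only [List.length_append, List.length_replicate, List.length_cons,
          List.length_nil] at hlen
        obtain ⟨k, hk⟩ : ∃ k, i a b h1 = k + 1 :=
          ⟨i a b h1 - 1, by have := hi2 a b h1; omega⟩
        obtain ⟨k', hk'⟩ : ∃ k', i a' b' h2 = k' + 1 :=
          ⟨i a' b' h2 - 1, by have := hi2 a' b' h2; omega⟩
        rw [hk, hk'] at h hlen
        simp only [List.replicate_succ, List.cons_append, List.cons.injEq] at h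
        obtain ⟨ha, h'⟩ := h
        subst ha
        have hkk : k = k' := by omega
        subst hkk
        have hb : b = b' := by
          have := List.append_inj_right h' rfl
          simpa using this
        simp [hb]
  have hcard : (Finset.image m Finset.univ).card = 2 * q ^ 2 := by
    rw [Finset.card_image_of_injective _ hinj, Finset.card_univ]
    simp [Fintype.card_prod]
    ring
  have hsub : ↑(Finset.image m Finset.univ) ⊆ S := by
    intro w hw
    simp only [Finset.coe_image, Set.mem_image] at hw
    obtain ⟨x, _, rfl⟩ := hw
    exact hmem x
  have hle := Set.ncard_le_ncard hsub hS
  rwa [Set.ncard_coe_finset, hcard] at hle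
end

section
/- Let q ≥ 1 and let Σ = {x_1, …, x_q}. The set S = ⋃_{i=1}^q {x_i², x_i³} ∪ ⋃_{i ≠ j} {x_i x_j} over Σ has cardinality q² + q, its shortest words have length 2, and its iterated shuffle S^† is co-finite. -/
lemma shuffle_nil_left {α : Type*} : ∀ v : List α, Shuffle [] v v
  | [] => .nil
  | _ :: t => .right (shuffle_nil_left t)

/-- extract `n` copies of `a` from `w`. -/
lemma shuffle_extract {α : Type*} [DecidableEq α] (a : α) :
    ∀ (w : List α) (n : ℕ), n ≤ w.count a →
      ∃ w', Shuffle (List.replicate n a) w' w ∧ w'.length + n = w.length := by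
  intro w
  induction w with
  | nil =>
    intro n hn
    simp at hn
    exact ⟨[], by simpa [hn] using Shuffle.nil, by simp [hn]⟩
  | cons b t ih =>
    intro n hn
    match n with
    | 0 => exact ⟨b :: t, shuffle_nil_left _, by simp⟩
    | m + 1 =>
      by_cases hb : b = a
      · subst hb
        rw [List.count_cons_self] at hn
        obtain ⟨w', hsh, hlen⟩ := ih m (by omega)
        exact ⟨w', Shuffle.left hsh, by simp [hlen.symm]; omega⟩
      · rw [List.count_cons_of_ne hb] at hn
        obtain ⟨w', hsh, hlen⟩ := ih (m+1) hn
        exact ⟨b :: w', Shuffle.right hsh, by simp; omega⟩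

lemma iter_even {α : Type*} {S : Set (List α)} (hpair : ∀ a b : α, [a, b] ∈ S) :
    ∀ w : List α, Even w.length → IterShuffle S w
  | [], _ => .nil
  | [a], h => by simp [Nat.even_iff] at h
  | a :: b :: t, h => by
    have ht : Even t.length := by
      simp [Nat.even_add_one, Nat.even_iff] at h ⊢; omega
    exact .step (hpair a b) (iter_even hpair t ht)
      (Shuffle.left (Shuffle.left (shuffle_nil_left t)))

/-- The set `S = ⋃ᵢ {xᵢ², xᵢ³} ∪ ⋃_{i ≠ j} {xᵢxⱼ}` over a `q`-letter alphabet
(`q ≥ 1`) has cardinality `q² + q`, its shortest words have length `2`, and its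
iterated shuffle is co-finite. -/
theorem proto_m_two_tight (q : ℕ) (hq : 1 ≤ q)
    (S : Set (List (Fin q)))
    (hS : S = {w | ∃ i : Fin q, w = List.replicate 2 i ∨ w = List.replicate 3 i} ∪
              {w | ∃ i j : Fin q, i ≠ j ∧ w = [i, j]}) :
    S.ncard = q ^ 2 + q ∧
    (∃ w ∈ S, w.length = 2) ∧ (∀ w ∈ S, 2 ≤ w.length) ∧
    {w : List (Fin q) | ¬ IterShuffle S w}.Finite := by
  have hpair : ∀ a b : Fin q, [a, b] ∈ S := by
    intro a b
    rw [hS]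
    by_cases hab : a = b
    · exact Or.inl ⟨a, Or.inl (by simp [hab, List.replicate])⟩
    · exact Or.inr ⟨a, b, hab, rfl⟩
  have hcube : ∀ i : Fin q, [i, i, i] ∈ S := by
    intro i; rw [hS]; exact Or.inl ⟨i, Or.inr (by simp [List.replicate])⟩
  refine ⟨?_, ?_, ?_, ?_⟩
  · -- cardinality
    have hSeq : S = ↑((Finset.univ.image fun p : Fin q × Fin q => [p.1, p.2]) ∪
        (Finset.univ.image fun i : Fin q => [i, i, i])) := by
      rw [hS]
      ext w
      simp only [Finset.coe_union, Finset.coe_image, Finset.coe_univ, Set.image_univ,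
        Set.mem_union, Set.mem_setOf_eq, Set.mem_range, List.replicate]
      constructor
      · rintro (⟨i, rfl | rfl⟩ | ⟨i, j, hij, rfl⟩)
        · exact Or.inl ⟨(i, i), by simp [List.replicate]⟩
        · exact Or.inr ⟨i, by simp [List.replicate]⟩
        · exact Or.inl ⟨(i, j), rfl⟩
      · rintro (⟨⟨i, j⟩, rfl⟩ | ⟨i, rfl⟩)
        · by_cases hij : i = j
          · exact Or.inl ⟨i, Or.inl (by simp [hij, List.replicate])⟩
          · exact Or.inr ⟨i, j, hij, rfl⟩
        · exact Or.inl ⟨i, Or.inr (by simp [List.replicate])⟩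
    rw [hSeq, Set.ncard_coe_finset]
    rw [Finset.card_union_of_disjoint]
    · rw [Finset.card_image_of_injective _ (fun p p' h => by
          simpa [Prod.ext_iff] using h),
        Finset.card_image_of_injective _ (fun i i' h => by simpa using h)]
      simp [sq]
    · simp only [Finset.disjoint_left, Finset.mem_image]
      rintro w ⟨p, -, rfl⟩ ⟨i, -, h⟩
      simp at h
  · -- shortest word exists
    have i : Fin q := ⟨0, hq⟩
    exact ⟨[i, i], hpair i i, rfl⟩
  · -- all words length ≥ 2
    intro w hw
    rw [hS] at hw
    rcases hw with ⟨i, rfl | rfl⟩ | ⟨i, j, -, rfl⟩ <;> simp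
  · -- cofinite
    apply Set.Finite.subset (List.finite_length_le (Fin q) (2 * q + 1))
    intro w hw
    simp only [Set.mem_setOf_eq] at hw ⊢
    by_contra hlen
    push_neg at hlen
    apply hw
    by_cases he : Even w.length
    · exact iter_even hpair w he
    · -- odd, long: some letter appears ≥ 3 times
      have hsum : ∑ i : Fin q, w.count i = w.length := by
        have := Multiset.sum_count_eq_card (s := (Finset.univ : Finset (Fin q)))
          (m := (w : Multiset (Fin q))) (fun a _ => Finset.mem_univ a)
        simpa using this
      have hex : ∃ i : Fin q, 3 ≤ w.count i := by
        by_contra hc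
        push_neg at hc
        have : ∑ i : Fin q, w.count i ≤ ∑ _i : Fin q, 2 :=
          Finset.sum_le_sum fun i _ => Nat.le_of_lt_succ (hc i)
        simp [hsum] at this
        omega
      obtain ⟨i, hi⟩ := hex
      obtain ⟨w', hsh, hlen'⟩ := shuffle_extract i w 3 hi
      have : Even w'.length := by
        rw [Nat.even_iff] at he ⊢; omega
      exact .step (hcube i) (iter_even hpair w' this)
        (by simpa [List.replicate] using hsh)
end
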